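/- Let (M,φ) be a latticed F-isocrystal over a perfect field k with s-number s and h-number h, and let (M*,φ) be its dual. Denote by s* and h* the s-number and h-number of (M*,φ). Then s* = max{0, h − s} and s = max{0, h* − s*}. Consequently, if s = 0 then s* = h and h* ∈ {0,1,...,h}, and if s > 0 then h* = max(s, h). -/

import Mathlib

open Pointwise

noncomputable section

/-- `W(k)[1/p]`. -/
abbrev Wp (p : ℕ) [Fact p.Prime] (k : Type) [CommRing k] : Type :=
  Localization.Away (p : WittVector p k)

/-- The Frobenius `σ` extended to `W(k)[1/p]`. -/
noncomputable def frobLoc (p : ℕ) [Fact p.Prime] (k : Type) [CommRing k] [CharP k p] :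
    Wp p k →+* Wp p k :=
  IsLocalization.Away.lift (S := Wp p k) (p : WittVector p k)
    (g := (algebraMap (WittVector p k) (Wp p k)).comp WittVector.frobenius)
    (by
      have h : ((algebraMap (WittVector p k) (Wp p k)).comp WittVector.frobenius)
          ((p : ℕ) : WittVector p k) =
            algebraMap (WittVector p k) (Wp p k) (p : WittVector p k) := by
        simp [map_natCast]
      rw [h]
      exact IsLocalization.map_units (M := Submonoid.powers ((p : WittVector p k))) (Wp p k)
        ⟨_, Submonoid.mem_powers _⟩)

/-- The standard lattice `M = W(k)^r ⊆ (W(k)[1/p])^r`. -/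
noncomputable def stdLat (p : ℕ) [Fact p.Prime] (k : Type) [CommRing k] (r : ℕ) :
    Submodule (WittVector p k) (Fin r → Wp p k) :=
  Submodule.span (WittVector p k) (Set.range fun i : Fin r => Pi.single i (1 : Wp p k))

/-- The `s`-number of `(M,φ)`: the smallest `s ≥ 0` with `φ(p^s M) ⊆ M`. -/
noncomputable def sNum (p : ℕ) [Fact p.Prime] (k : Type) [CommRing k] (r : ℕ)
    (φ : (Fin r → Wp p k) → (Fin r → Wp p k)) : ℕ :=
  sInf {s : ℕ | ∀ x ∈ stdLat p k r, ((p : WittVector p k) ^ s) • φ x ∈ stdLat p k r}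

/-- The `h`-number of `(M,φ)`: the smallest `h` with `p^h M ⊆ p^s φ(M)`
(equivalently `p^{h−s} M ⊆ φ(M)`). -/
noncomputable def hNum (p : ℕ) [Fact p.Prime] (k : Type) [CommRing k] (r : ℕ)
    (φ : (Fin r → Wp p k) → (Fin r → Wp p k)) : ℕ :=
  sInf {h : ℕ | ∀ x ∈ stdLat p k r, ((p : WittVector p k) ^ h) • x ∈
    ((p : WittVector p k) ^ (sNum p k r φ)) •
      Submodule.span (WittVector p k) (φ '' (stdLat p k r))}

section Helpers
set_option linter.unusedSectionVars false
variable (p : ℕ) [Fact p.Prime] (k : Type) [Field k] [CharP k p] [PerfectRing k p]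

lemma pA_isUnit : IsUnit (algebraMap (WittVector p k) (Wp p k) (p : WittVector p k)) :=
  IsLocalization.map_units (M := Submonoid.powers ((p : WittVector p k))) (Wp p k)
    ⟨_, Submonoid.mem_powers _⟩

lemma p_ne_zero : ((p : ℕ) : WittVector p k) ≠ 0 :=
  (WittVector.irreducible p).ne_zero

lemma algInj : Function.Injective (algebraMap (WittVector p k) (Wp p k)) :=
  IsLocalization.injective (Wp p k)
    (powers_le_nonZeroDivisors_of_noZeroDivisors (p_ne_zero p k))

lemma frobLoc_alg (w : WittVector p k) :
    frobLoc p k (algebraMap (WittVector p k) (Wp p k) w) =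
      algebraMap (WittVector p k) (Wp p k) (WittVector.frobenius w) :=
  IsLocalization.Away.lift_eq _ _ _

lemma frobLoc_mem_range {x : Wp p k} :
    frobLoc p k x ∈ (algebraMap (WittVector p k) (Wp p k)).range ↔
      x ∈ (algebraMap (WittVector p k) (Wp p k)).range := by
  constructor
  · rintro ⟨w, hw⟩
    obtain ⟨⟨a, s⟩, hs⟩ := IsLocalization.surj (Submonoid.powers ((p : WittVector p k))) x
    obtain ⟨m, hm⟩ := s.2
    rw [← hm] at hs
    -- x * algebraMap (p^m) = algebraMap a
    have h2 := congrArg (frobLoc p k) hs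
    rw [map_mul, frobLoc_alg, frobLoc_alg, map_pow, map_natCast] at h2
    -- frobLoc x * algebraMap (p^m) = algebraMap (σ a)
    rw [← hw] at h2
    rw [← map_mul] at h2
    have h3 : w * (p : WittVector p k) ^ m = WittVector.frobenius a := algInj p k h2
    obtain ⟨b, hb⟩ := (WittVector.frobenius_bijective p k).surjective w
    refine ⟨b, ?_⟩
    have h4 : WittVector.frobenius (b * (p : WittVector p k) ^ m) = WittVector.frobenius a := by
      rw [map_mul, map_pow, map_natCast, hb]; exact h3
    have h5 : b * (p : WittVector p k) ^ m = a := (WittVector.frobenius_bijective p k).injective h4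
    -- x = algebraMap b
    have hu : IsUnit (algebraMap (WittVector p k) (Wp p k) ((p : WittVector p k) ^ m)) := by
      rw [map_pow]; exact (pA_isUnit p k).pow m
    apply hu.mul_right_cancel
    rw [← map_mul, h5]
    exact hs.symm
  · rintro ⟨w, rfl⟩
    exact ⟨WittVector.frobenius w, (frobLoc_alg p k w).symm⟩

lemma smul_cancel {r : ℕ} {a : ℕ} {y z : Fin r → Wp p k}
    (h : ((p : WittVector p k) ^ a) • y = ((p : WittVector p k) ^ a) • z) : y = z := by
  have hu : IsUnit (algebraMap (WittVector p k) (Wp p k) ((p : WittVector p k) ^ a)) := by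
    rw [map_pow]; exact (pA_isUnit p k).pow a
  funext i
  have := congrFun h i
  simp only [Pi.smul_apply] at this
  rw [← algebraMap_smul (Wp p k) ((p : WittVector p k) ^ a) (y i),
    ← algebraMap_smul (Wp p k) ((p : WittVector p k) ^ a) (z i), smul_eq_mul, smul_eq_mul] at this
  exact hu.mul_left_cancel this

end Helpers

section Helpers2
set_option linter.unusedSectionVars false
variable (p : ℕ) [Fact p.Prime] (k : Type) [Field k] [CharP k p] [PerfectRing k p] {r : ℕ}

lemma smul_applyW (c : WittVector p k) (v : Fin r → Wp p k) (i : Fin r) :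
    (c • v) i = algebraMap (WittVector p k) (Wp p k) c * v i := by
  rw [Pi.smul_apply, ← algebraMap_smul (Wp p k) c (v i), smul_eq_mul]

lemma sum_mul_single (g : Fin r → Wp p k) (j : Fin r) :
    (∑ i, g i * (Pi.single j 1 : Fin r → Wp p k) i) = g j := by
  rw [Fintype.sum_eq_single j]
  · rw [Pi.single_eq_same, mul_one]
  · intro i hi
    rw [Pi.single_eq_of_ne hi, mul_zero]

lemma mem_stdLat {x : Fin r → Wp p k} :
    x ∈ stdLat p k r ↔ ∀ i, x i ∈ (algebraMap (WittVector p k) (Wp p k)).range := by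
  constructor
  · intro hx
    induction hx using Submodule.span_induction with
    | mem v hv =>
      obtain ⟨j, rfl⟩ := hv
      intro i
      rcases eq_or_ne i j with rfl | hij
      · exact ⟨1, by simp⟩
      · exact ⟨0, by simp [Pi.single_eq_of_ne hij]⟩
    | zero => exact fun i => ⟨0, by simp⟩
    | add u v hu' hv' hu hv =>
      intro i
      rw [Pi.add_apply]
      exact add_mem (hu i) (hv i)
    | smul c v hv' hv =>
      intro i
      obtain ⟨w, hw⟩ := hv i
      exact ⟨c * w, by rw [map_mul, hw, ← smul_applyW]⟩
  · intro hx
    have : x = ∑ i, Classical.choose (hx i) • (Pi.single i 1 : Fin r → Wp p k) := by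
      funext j
      rw [Finset.sum_apply, Fintype.sum_eq_single j]
      · rw [smul_applyW, Pi.single_eq_same, mul_one, Classical.choose_spec (hx j)]
      · intro i hi
        rw [smul_applyW, Pi.single_eq_of_ne (Ne.symm hi), mul_zero]
    rw [this]
    exact Submodule.sum_mem _ fun i _ =>
      Submodule.smul_mem _ _ (Submodule.subset_span (Set.mem_range_self i))

lemma exists_pow_smul_mem (v : Fin r → Wp p k) :
    ∃ t : ℕ, ∀ t' ≥ t, ((p : WittVector p k) ^ t') • v ∈ stdLat p k r := by
  have key : ∀ i : Fin r, ∃ t : ℕ, ∀ t' ≥ t,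
      algebraMap (WittVector p k) (Wp p k) ((p : WittVector p k) ^ t') * v i ∈
        (algebraMap (WittVector p k) (Wp p k)).range := by
    intro i
    obtain ⟨⟨a, s⟩, hs⟩ := IsLocalization.surj (Submonoid.powers ((p : WittVector p k))) (v i)
    obtain ⟨m, hm⟩ := s.2
    refine ⟨m, fun t' ht' => ⟨(p : WittVector p k) ^ (t' - m) * a, ?_⟩⟩
    rw [map_mul, ← hs, ← hm]
    rw [show ((p : WittVector p k) ^ t') = (p : WittVector p k) ^ (t' - m) *
      (p : WittVector p k) ^ m by rw [← pow_add]; congr 1; omega]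
    rw [map_mul]
    ring
  choose t ht using key
  refine ⟨Finset.univ.sup t, fun t' ht' => (mem_stdLat p k).2 fun i => ?_⟩
  rw [smul_applyW]
  exact ht i t' (le_trans (Finset.le_sup (Finset.mem_univ i)) ht')

end Helpers2

section Phi
set_option linter.unusedSectionVars false
variable (p : ℕ) [Fact p.Prime] (k : Type) [Field k] [CharP k p] [PerfectRing k p] {r : ℕ}

variable (φ : (Fin r → Wp p k) → (Fin r → Wp p k))
  (hadd : ∀ u v, φ (u + v) = φ u + φ v)
  (hsemi : ∀ (c : WittVector p k) v, φ ((algebraMap (WittVector p k) (Wp p k) c) • v) =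
    (algebraMap (WittVector p k) (Wp p k) (WittVector.frobenius c)) • φ v)

include hadd in
lemma phi_zero : φ 0 = 0 := by
  have := hadd 0 0
  rw [add_zero] at this
  exact right_eq_add.1 this

include hsemi in
lemma phi_smulW (c : WittVector p k) (v : Fin r → Wp p k) :
    φ (c • v) = (WittVector.frobenius c) • φ v := by
  rw [← algebraMap_smul (Wp p k) c v, hsemi]
  exact algebraMap_smul (R := WittVector p k) (Wp p k) (WittVector.frobenius c) (φ v)

include hsemi in
lemma phi_pow_smul (n : ℕ) (v : Fin r → Wp p k) :
    φ (((p : WittVector p k) ^ n) • v) = ((p : WittVector p k) ^ n) • φ v := by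
  rw [phi_smulW p k φ hsemi, map_pow, map_natCast]

include hadd hsemi in
lemma mem_span_image {x : Fin r → Wp p k} :
    x ∈ Submodule.span (WittVector p k) (φ '' (stdLat p k r)) ↔
      ∃ y ∈ stdLat p k r, φ y = x := by
  constructor
  · intro hx
    induction hx using Submodule.span_induction with
    | mem v hv =>
      obtain ⟨y, hy, rfl⟩ := hv
      exact ⟨y, hy, rfl⟩
    | zero => exact ⟨0, Submodule.zero_mem _, phi_zero p k φ hadd⟩
    | add u v hu' hv' hu hv =>
      obtain ⟨y, hy, rfl⟩ := hu
      obtain ⟨z, hz, rfl⟩ := hv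
      exact ⟨y + z, Submodule.add_mem _ hy hz, hadd y z⟩
    | smul c v hv' hv =>
      obtain ⟨y, hy, rfl⟩ := hv
      refine ⟨((WittVector.frobeniusEquiv p k).symm c) • y, Submodule.smul_mem _ _ hy, ?_⟩
      rw [phi_smulW p k φ hsemi]
      congr 1
      exact (WittVector.frobeniusEquiv p k).apply_symm_apply c
  · rintro ⟨y, hy, rfl⟩
    exact Submodule.subset_span ⟨y, hy, rfl⟩

end Phi

section Dual
set_option linter.unusedSectionVars false
variable (p : ℕ) [Fact p.Prime] (k : Type) [Field k] [CharP k p] [PerfectRing k p] {r : ℕ}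

lemma sum_single_mul (g : Fin r → Wp p k) (j : Fin r) :
    (∑ i, (Pi.single j 1 : Fin r → Wp p k) i * g i) = g j := by
  rw [Fintype.sum_eq_single j]
  · rw [Pi.single_eq_same, one_mul]
  · intro i hi
    rw [Pi.single_eq_of_ne hi, zero_mul]

lemma single_mem_stdLat (j : Fin r) : (Pi.single j 1 : Fin r → Wp p k) ∈ stdLat p k r :=
  Submodule.subset_span ⟨j, rfl⟩

variable (φ ψ : (Fin r → Wp p k) → (Fin r → Wp p k))

lemma dual_shift
    (hφadd : ∀ u v, φ (u + v) = φ u + φ v)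
    (hφsemi : ∀ (c : WittVector p k) v, φ ((algebraMap (WittVector p k) (Wp p k) c) • v) =
      (algebraMap (WittVector p k) (Wp p k) (WittVector.frobenius c)) • φ v)
    (hφbij : Function.Bijective φ)
    (hdual : ∀ f x : Fin r → Wp p k,
      (∑ i, ψ f i * φ x i) = frobLoc p k (∑ i, f i * x i)) (n : ℕ) :
    (∀ f ∈ stdLat p k r, ((p : WittVector p k) ^ n) • ψ f ∈ stdLat p k r) ↔
    (∀ x ∈ stdLat p k r, ((p : WittVector p k) ^ n) • x ∈
      Submodule.span (WittVector p k) (φ '' (stdLat p k r))) := by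
  constructor
  · intro H x hx
    obtain ⟨y, hy⟩ := hφbij.surjective (((p : WittVector p k) ^ n) • x)
    refine (mem_span_image p k φ hφadd hφsemi).2 ⟨y, ?_, hy⟩
    refine (mem_stdLat p k).2 fun j => ?_
    refine (frobLoc_mem_range p k).1 ?_
    have e1 : (∑ i, (Pi.single j 1 : Fin r → Wp p k) i * y i) = y j :=
      sum_single_mul p k y j
    rw [← e1, ← hdual, hy]
    have hterm : ∀ i : Fin r, ψ (Pi.single j 1 : Fin r → Wp p k) i *
        (((p : WittVector p k) ^ n) • x) i
        = (((p : WittVector p k) ^ n) • ψ (Pi.single j 1 : Fin r → Wp p k)) i * x i := by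
      intro i
      rw [smul_applyW, smul_applyW]
      ring
    simp only [hterm]
    refine sum_mem fun i _ => mul_mem ?_ ?_
    · exact (mem_stdLat p k).1 (H _ (single_mem_stdLat p k j)) i
    · exact (mem_stdLat p k).1 hx i
  · intro H f hf
    refine (mem_stdLat p k).2 fun j => ?_
    obtain ⟨y, hy, hyeq⟩ := (mem_span_image p k φ hφadd hφsemi).1
      (H _ (single_mem_stdLat p k j))
    have e : (∑ i, ψ f i * (((p : WittVector p k) ^ n) •
        (Pi.single j 1 : Fin r → Wp p k)) i)
        = algebraMap (WittVector p k) (Wp p k) ((p : WittVector p k) ^ n) * ψ f j := by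
      simp only [smul_applyW]
      rw [Finset.sum_congr rfl (fun i _ =>
        mul_left_comm (ψ f i) (algebraMap (WittVector p k) (Wp p k) ((p : WittVector p k) ^ n))
          ((Pi.single j 1 : Fin r → Wp p k) i)), ← Finset.mul_sum, sum_mul_single]
    rw [smul_applyW, ← e, ← hyeq, hdual]
    refine (frobLoc_mem_range p k).2 ?_
    refine sum_mem fun i _ => mul_mem ?_ ?_
    · exact (mem_stdLat p k).1 hf i
    · exact (mem_stdLat p k).1 hy i

end Dual

section Counts
set_option linter.unusedSectionVars false
variable (p : ℕ) [Fact p.Prime] (k : Type) [Field k] [CharP k p] [PerfectRing k p] {r : ℕ}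

lemma mem_psmul {a : WittVector p k} {S : Submodule (WittVector p k) (Fin r → Wp p k)}
    {x : Fin r → Wp p k} : x ∈ a • S ↔ ∃ y ∈ S, a • y = x := by
  rw [← SetLike.mem_coe, Submodule.coe_pointwise_smul]
  exact Set.mem_smul_set

variable (φ : (Fin r → Wp p k) → (Fin r → Wp p k))
  (hadd : ∀ u v, φ (u + v) = φ u + φ v)
  (hsemi : ∀ (c : WittVector p k) v, φ ((algebraMap (WittVector p k) (Wp p k) c) • v) =
    (algebraMap (WittVector p k) (Wp p k) (WittVector.frobenius c)) • φ v)
  (hbij : Function.Bijective φ)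

include hadd hsemi in
lemma sSet_nonempty : ∃ s : ℕ, ∀ x ∈ stdLat p k r,
    ((p : WittVector p k) ^ s) • φ x ∈ stdLat p k r := by
  have key : ∀ i : Fin r, ∃ t : ℕ, ∀ t' ≥ t,
      ((p : WittVector p k) ^ t') • φ (Pi.single i 1 : Fin r → Wp p k) ∈ stdLat p k r :=
    fun i => exists_pow_smul_mem p k _
  choose t ht using key
  set s := Finset.univ.sup t with hs
  refine ⟨s, fun x hx => ?_⟩
  induction hx using Submodule.span_induction with
  | mem v hv =>
    obtain ⟨j, rfl⟩ := hv
    exact ht j s (Finset.le_sup (Finset.mem_univ j))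
  | zero =>
    rw [phi_zero p k φ hadd]
    exact Submodule.smul_mem _ _ (Submodule.zero_mem _)
  | add u v hu' hv' hu hv =>
    rw [hadd, smul_add]
    exact Submodule.add_mem _ hu hv
  | smul c v hv' hv =>
    rw [phi_smulW p k φ hsemi, smul_comm]
    exact Submodule.smul_mem _ _ hv

include hadd hsemi hbij in
lemma tSet_nonempty : ∃ t : ℕ, ∀ x ∈ stdLat p k r,
    ((p : WittVector p k) ^ t) • x ∈
      Submodule.span (WittVector p k) (φ '' (stdLat p k r)) := by
  have key : ∀ j : Fin r, ∃ t : ℕ, ∀ t' ≥ t,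
      ((p : WittVector p k) ^ t') • (Function.surjInv hbij.surjective (Pi.single j 1 : Fin r → Wp p k))
        ∈ stdLat p k r :=
    fun j => exists_pow_smul_mem p k _
  choose t ht using key
  set s := Finset.univ.sup t with hs
  refine ⟨s, fun x hx => ?_⟩
  induction hx using Submodule.span_induction with
  | mem v hv =>
    obtain ⟨j, rfl⟩ := hv
    refine (mem_span_image p k φ hadd hsemi).2
      ⟨((p : WittVector p k) ^ s) • (Function.surjInv hbij.surjective (Pi.single j 1 : Fin r → Wp p k)),
        ht j s (Finset.le_sup (Finset.mem_univ j)), ?_⟩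
    rw [phi_pow_smul p k φ hsemi, Function.surjInv_eq hbij.surjective]
  | zero => exact Submodule.smul_mem _ _ (Submodule.zero_mem _)
  | add u v hu' hv' hu hv =>
    rw [smul_add]
    exact Submodule.add_mem _ hu hv
  | smul c v hv' hv =>
    rw [smul_comm]
    exact Submodule.smul_mem _ _ hv

end Counts

def Tset (p : ℕ) [Fact p.Prime] (k : Type) [CommRing k] (r : ℕ)
    (φ : (Fin r → Wp p k) → (Fin r → Wp p k)) : Set ℕ :=
  {t : ℕ | ∀ x ∈ stdLat p k r, ((p : WittVector p k) ^ t) • x ∈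
    Submodule.span (WittVector p k) (φ '' (stdLat p k r))}

def Hset (p : ℕ) [Fact p.Prime] (k : Type) [CommRing k] (r : ℕ)
    (φ : (Fin r → Wp p k) → (Fin r → Wp p k)) : Set ℕ :=
  {h : ℕ | ∀ x ∈ stdLat p k r, ((p : WittVector p k) ^ h) • x ∈
    ((p : WittVector p k) ^ (sNum p k r φ)) •
      Submodule.span (WittVector p k) (φ '' (stdLat p k r))}

section Main
set_option linter.unusedSectionVars false
variable (p : ℕ) [Fact p.Prime] (k : Type) [Field k] [CharP k p] [PerfectRing k p] {r : ℕ}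
variable (φ : (Fin r → Wp p k) → (Fin r → Wp p k))
  (hadd : ∀ u v, φ (u + v) = φ u + φ v)
  (hsemi : ∀ (c : WittVector p k) v, φ ((algebraMap (WittVector p k) (Wp p k) c) • v) =
    (algebraMap (WittVector p k) (Wp p k) (WittVector.frobenius c)) • φ v)
  (hbij : Function.Bijective φ)

include hadd hsemi in
lemma sNum_mem : ∀ x ∈ stdLat p k r,
    ((p : WittVector p k) ^ (sNum p k r φ)) • φ x ∈ stdLat p k r :=
  Nat.sInf_mem (sSet_nonempty p k φ hadd hsemi)

include hadd hsemi hbij in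
lemma tInf_mem : sInf (Tset p k r φ) ∈ Tset p k r φ :=
  Nat.sInf_mem (tSet_nonempty p k φ hadd hsemi hbij)

include hadd hsemi hbij in
lemma st_mem_H : sNum p k r φ + sInf (Tset p k r φ) ∈ Hset p k r φ := by
  intro x hx
  rw [pow_add, mul_smul]
  exact Submodule.smul_mem_pointwise_smul _ _ _ (tInf_mem p k φ hadd hsemi hbij x hx)

include hadd hsemi hbij in
lemma hNum_mem : hNum p k r φ ∈ Hset p k r φ :=
  Nat.sInf_mem ⟨_, st_mem_H p k φ hadd hsemi hbij⟩

include hadd hsemi hbij in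
lemma hNum_le : hNum p k r φ ≤ sNum p k r φ + sInf (Tset p k r φ) :=
  Nat.sInf_le (st_mem_H p k φ hadd hsemi hbij)

lemma H_step1 {h : ℕ} (hh : h ∈ Hset p k r φ) (hsh : sNum p k r φ ≤ h) :
    (h - sNum p k r φ) ∈ Tset p k r φ := by
  intro x hx
  obtain ⟨n, hn, hne⟩ := (mem_psmul p k).1 (hh x hx)
  have key : ((p : WittVector p k) ^ (sNum p k r φ)) •
      (((p : WittVector p k) ^ (h - sNum p k r φ)) • x)
      = ((p : WittVector p k) ^ (sNum p k r φ)) • n := by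
    rw [smul_smul, ← pow_add, hne]
    congr 2
    omega
  have := smul_cancel p k key
  rw [this]
  exact hn

lemma H_step2 {h : ℕ} (hh : h ∈ Hset p k r φ) (hhs : h < sNum p k r φ) :
    sNum p k r φ ∈ Hset p k r φ := by
  intro x hx
  obtain ⟨n, hn, hne⟩ := (mem_psmul p k).1 (hh x hx)
  have e : (sNum p k r φ - h) + h = sNum p k r φ := by omega
  have key : ((p : WittVector p k) ^ (sNum p k r φ)) •
      (((p : WittVector p k) ^ (sNum p k r φ - h)) • n)
      = ((p : WittVector p k) ^ (sNum p k r φ)) • x := by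
    rw [smul_comm, hne, smul_smul, ← pow_add, e]
  rw [← key]
  exact Submodule.smul_mem_pointwise_smul _ _ _ (Submodule.smul_mem _ _ hn)

lemma hNum_ge (htpos : 0 < sInf (Tset p k r φ)) {h : ℕ} (hh : h ∈ Hset p k r φ) :
    sNum p k r φ + sInf (Tset p k r φ) ≤ h := by
  rcases le_or_gt (sNum p k r φ) h with hsh | hsh
  · have := Nat.sInf_le (H_step1 p k φ hh hsh)
    omega
  · have hs : sNum p k r φ ∈ Hset p k r φ := H_step2 p k φ hh hsh
    have := Nat.sInf_le (H_step1 p k φ hs le_rfl)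
    omega

include hadd hsemi hbij in
lemma hNum_le_s (ht0 : sInf (Tset p k r φ) = 0) : hNum p k r φ ≤ sNum p k r φ := by
  have h0 : (0 : ℕ) ∈ Tset p k r φ := ht0 ▸ tInf_mem p k φ hadd hsemi hbij
  refine Nat.sInf_le ?_
  intro x hx
  have hxN : x ∈ Submodule.span (WittVector p k) (φ '' (stdLat p k r)) := by
    have := h0 x hx
    rwa [pow_zero, one_smul] at this
  exact Submodule.smul_mem_pointwise_smul _ _ _ hxN

end Main


/-- Let `(M,φ)` be a latticed `F`-isocrystal over a perfect field `k` with
`s`-number `s` and `h`-number `h`, and let `(M*,ψ)` be its dual (realized via the standard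
perfect pairing `⟨f,x⟩ = Σ f_i x_i`, so that `⟨ψ f, φ x⟩ = σ⟨f,x⟩`).  Then, writing `s*`, `h*`
for the `s`- and `h`-numbers of the dual, we have `s* = max{0, h−s}` and
`s = max{0, h*−s*}` (with truncated subtraction); consequently if `s = 0` then `s* = h` and
`h* ≤ h`, and if `s > 0` then `h* = max(s,h)`. -/
theorem stmt11 (p : ℕ) [Fact p.Prime] (k : Type) [Field k] [CharP k p] [PerfectRing k p]
    (r : ℕ)
    (φ ψ : (Fin r → Wp p k) → (Fin r → Wp p k))
    (hφadd : ∀ u v, φ (u + v) = φ u + φ v)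
    (hφsemi : ∀ (c : WittVector p k) v, φ ((algebraMap (WittVector p k) (Wp p k) c) • v) =
      (algebraMap (WittVector p k) (Wp p k) (WittVector.frobenius c)) • φ v)
    (hφbij : Function.Bijective φ)
    (hψadd : ∀ u v, ψ (u + v) = ψ u + ψ v)
    (hψsemi : ∀ (c : WittVector p k) v, ψ ((algebraMap (WittVector p k) (Wp p k) c) • v) =
      (algebraMap (WittVector p k) (Wp p k) (WittVector.frobenius c)) • ψ v)
    (hψbij : Function.Bijective ψ)
    (hdual : ∀ f x : Fin r → Wp p k,
      (∑ i, ψ f i * φ x i) = frobLoc p k (∑ i, f i * x i)) :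
    sNum p k r ψ = hNum p k r φ - sNum p k r φ ∧
    sNum p k r φ = hNum p k r ψ - sNum p k r ψ ∧
    (sNum p k r φ = 0 → sNum p k r ψ = hNum p k r φ ∧ hNum p k r ψ ≤ hNum p k r φ) ∧
    (0 < sNum p k r φ → hNum p k r ψ = max (sNum p k r φ) (hNum p k r φ)) := by
  have hdual' : ∀ f x : Fin r → Wp p k,
      (∑ i, φ f i * ψ x i) = frobLoc p k (∑ i, f i * x i) := by
    intro f x
    calc (∑ i, φ f i * ψ x i) = ∑ i, ψ x i * φ f i :=
          Finset.sum_congr rfl fun i _ => mul_comm (φ f i) (ψ x i)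
      _ = frobLoc p k (∑ i, x i * f i) := hdual x f
      _ = frobLoc p k (∑ i, f i * x i) :=
          congrArg (frobLoc p k) (Finset.sum_congr rfl fun i _ => mul_comm (x i) (f i))
  have hTφ : sNum p k r ψ = sInf (Tset p k r φ) :=
    congrArg sInf (Set.ext fun n => dual_shift p k φ ψ hφadd hφsemi hφbij hdual n)
  have hTψ : sNum p k r φ = sInf (Tset p k r ψ) :=
    congrArg sInf (Set.ext fun n => dual_shift p k ψ φ hψadd hψsemi hψbij hdual' n)
  have hA : hNum p k r φ ≤ sNum p k r φ + sNum p k r ψ := by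
    rw [hTφ]; exact hNum_le p k φ hφadd hφsemi hφbij
  have hB : 0 < sNum p k r ψ → sNum p k r φ + sNum p k r ψ ≤ hNum p k r φ := by
    intro ht
    rw [hTφ] at ht ⊢
    exact hNum_ge p k φ ht (hNum_mem p k φ hφadd hφsemi hφbij)
  have hC : sNum p k r ψ = 0 → hNum p k r φ ≤ sNum p k r φ := by
    intro ht
    rw [hTφ] at ht
    exact hNum_le_s p k φ hφadd hφsemi hφbij ht
  have hA' : hNum p k r ψ ≤ sNum p k r ψ + sNum p k r φ := by
    rw [hTψ]; exact hNum_le p k ψ hψadd hψsemi hψbij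
  have hB' : 0 < sNum p k r φ → sNum p k r ψ + sNum p k r φ ≤ hNum p k r ψ := by
    intro hs
    rw [hTψ] at hs ⊢
    exact hNum_ge p k ψ hs (hNum_mem p k ψ hψadd hψsemi hψbij)
  have hC' : sNum p k r φ = 0 → hNum p k r ψ ≤ sNum p k r ψ := by
    intro hs
    rw [hTψ] at hs
    exact hNum_le_s p k ψ hψadd hψsemi hψbij hs
  refine ⟨by omega, by omega, fun hs => ⟨by omega, by omega⟩, fun hs => by omega⟩
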